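/- Under Assumptions A1 and B1, suppose K, Q ∈ ℝ^{d×d_e} satisfy the alignment property (K = U_K Λ_K V^⊤, Q = U_Q Λ_Q V^⊤ with U_K, U_Q, V orthogonal, Λ_K, Λ_Q diagonal, and x_{i,opt(i)}/‖x_{i,opt(i)}‖_2 = u^k_{π(i)}, z_i/‖z_i‖_2 = u^q_{π(i)} for an injective π : [n] → [d]). For each i ∈ [n], set g_i := X_i K Q^⊤ z_i and ψ_i := X_i^⊤ Σ(g_i) γ_i ∈ ℝ^d. Then ψ_i is a strictly positive scalar multiple of x_{i,opt(i)}; in particular ψ_i ≠ 0 and ψ_i/‖ψ_i‖_2 = x_{i,opt(i)}/‖x_{i,opt(i)}‖_2 = u^k_{π(i)}. -/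

import Mathlib

open Real Filter Finset

noncomputable section

namespace AttnGF

/-- Softmax of a vector in `ℝ^L`. -/
def S {L : ℕ} (u : Fin L → ℝ) (l : Fin L) : ℝ := Real.exp (u l) / ∑ j, Real.exp (u j)

/-- Euclidean norm of a vector. -/
def l2 {d : ℕ} (x : Fin d → ℝ) : ℝ := Real.sqrt (∑ j, x j ^ 2)

/-- ℓ1 norm of a vector. -/
def l1 {d : ℕ} (x : Fin d → ℝ) : ℝ := ∑ j, |x j|

variable {n L d de : ℕ}

/-- Token scores γ_{il} = y_i v^⊤ x_{il}. -/
def gam (X : Fin n → Fin L → Fin d → ℝ) (y : Fin n → ℝ) (v : Fin d → ℝ)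
    (i : Fin n) (l : Fin L) : ℝ := y i * ∑ j, v j * X i l j

/-- g_i(β) = X_i (β ⊙ z_i) for the diagonal attention model. -/
def gD (X : Fin n → Fin L → Fin d → ℝ) (z : Fin n → Fin d → ℝ) (i : Fin n)
    (β : Fin d → ℝ) (l : Fin L) : ℝ := ∑ j, X i l j * (β j * z i j)

/-- Empirical exponential loss for the diagonal attention model. -/
def lossD (X : Fin n → Fin L → Fin d → ℝ) (z : Fin n → Fin d → ℝ)
    (y : Fin n → ℝ) (v : Fin d → ℝ) (β : Fin d → ℝ) : ℝ :=
  (1 / (n : ℝ)) * ∑ i, Real.exp (-(∑ l, gam X y v i l * S (gD X z i β) l))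

/-- Constraint vectors B_{il} = z_i ⊙ (x_{i,opt(i)} − x_{il}). -/
def Bv (X : Fin n → Fin L → Fin d → ℝ) (z : Fin n → Fin d → ℝ)
    (opt : Fin n → Fin L) (i : Fin n) (l : Fin L) (j : Fin d) : ℝ :=
  z i j * (X i (opt i) j - X i l j)

/-- (Σ(u) γ)_l where Σ(u) = Diag(S(u)) − S(u) S(u)^⊤. -/
def SigMul {L : ℕ} (u γv : Fin L → ℝ) (l : Fin L) : ℝ :=
  S u l * γv l - S u l * ∑ j, S u j * γv j

/-- j-th component of the gradient (partial derivative) of f at x. -/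
def pD {d : ℕ} (f : (Fin d → ℝ) → ℝ) (x : Fin d → ℝ) (j : Fin d) : ℝ :=
  fderiv ℝ f x (Pi.single j 1)

/-- Assumption A1. -/
def A1 (X : Fin n → Fin L → Fin d → ℝ) (y : Fin n → ℝ) (v : Fin d → ℝ)
    (opt : Fin n → Fin L) (nopt : Fin n → ℝ) : Prop :=
  ∀ i : Fin n, ∀ l : Fin L, l ≠ opt i →
    gam X y v i l < gam X y v i (opt i) ∧ gam X y v i l = nopt i

/-- Feasibility for the ℓ1-SVM. -/
def Feas (X : Fin n → Fin L → Fin d → ℝ) (z : Fin n → Fin d → ℝ)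
    (opt : Fin n → Fin L) (βf : Fin d → ℝ) : Prop :=
  ∀ i : Fin n, ∀ l : Fin L, l ≠ opt i → 1 ≤ ∑ j, βf j * Bv X z opt i l j

/-- Reparametrized gradient flow on (w₊, w₋). -/
def Flow (X : Fin n → Fin L → Fin d → ℝ) (z : Fin n → Fin d → ℝ)
    (y : Fin n → ℝ) (v : Fin d → ℝ) (wp wm : ℝ → Fin d → ℝ) : Prop :=
  ∀ t : ℝ, 0 ≤ t → ∀ j : Fin d,
    HasDerivAt (fun s => wp s j)
      (-(pD (fun u => lossD X z y v (fun k => (u k ^ 2 - wm t k ^ 2) / 2)) (wp t) j)) t ∧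
    HasDerivAt (fun s => wm s j)
      (-(pD (fun u => lossD X z y v (fun k => (wp t k ^ 2 - u k ^ 2) / 2)) (wm t) j)) t

/-- β(t) = (w₊(t)^{⊙2} − w₋(t)^{⊙2})/2. -/
def bCurve (wp wm : ℝ → Fin d → ℝ) (t : ℝ) (j : Fin d) : ℝ :=
  (wp t j ^ 2 - wm t j ^ 2) / 2

/-- Assumption A2 (initial loss bound). -/
def A2 (X : Fin n → Fin L → Fin d → ℝ) (z : Fin n → Fin d → ℝ)
    (y : Fin n → ℝ) (v : Fin d → ℝ) (opt : Fin n → Fin L) (nopt : Fin n → ℝ)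
    (β0 : Fin d → ℝ) : Prop :=
  ∀ jj : Fin n, lossD X z y v β0 ≤
    (Real.exp (-(nopt jj)) +
      ∑ i ∈ Finset.univ.erase jj, Real.exp (-(gam X y v i (opt i)))) / (n : ℝ)

/-- Margin μ(β) = min_{i, l ≠ opt(i)} β^⊤ B_{il}. -/
def margin (X : Fin n → Fin L → Fin d → ℝ) (z : Fin n → Fin d → ℝ)
    (opt : Fin n → Fin L) (β : Fin d → ℝ) : ℝ :=
  sInf {m : ℝ | ∃ i : Fin n, ∃ l : Fin L, l ≠ opt i ∧ m = ∑ j, β j * Bv X z opt i l j}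

/-- φ_{il}(t). -/
def phi (X : Fin n → Fin L → Fin d → ℝ) (z : Fin n → Fin d → ℝ)
    (y : Fin n → ℝ) (v : Fin d → ℝ) (β : ℝ → Fin d → ℝ) (i : Fin n) (l : Fin L)
    (t : ℝ) : ℝ :=
  -(2 / (n : ℝ)) * ∫ τ in (0:ℝ)..t,
    Real.exp (-(∑ l', gam X y v i l' * S (gD X z i (β τ)) l')) *
      SigMul (gD X z i (β τ)) (gam X y v i) l

/-- Dual variables λ_{il}(t) = φ_{il}(t) / ln μ(β(t)). -/
def lam (X : Fin n → Fin L → Fin d → ℝ) (z : Fin n → Fin d → ℝ)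
    (y : Fin n → ℝ) (v : Fin d → ℝ) (opt : Fin n → Fin L) (β : ℝ → Fin d → ℝ)
    (i : Fin n) (l : Fin L) (t : ℝ) : ℝ :=
  (1 / Real.log (margin X z opt (β t))) * phi X z y v β i l t

/-- g_i(K,Q) = X_i K Q^⊤ z_i for the full attention model. -/
def gM (X : Fin n → Fin L → Fin d → ℝ) (z : Fin n → Fin d → ℝ) (i : Fin n)
    (K Q : Fin d → Fin de → ℝ) (l : Fin L) : ℝ :=
  ∑ a, ∑ b, ∑ c, X i l a * K a b * Q c b * z i c

/-- Empirical exponential loss for the full attention model. -/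
def lossM (X : Fin n → Fin L → Fin d → ℝ) (z : Fin n → Fin d → ℝ)
    (y : Fin n → ℝ) (v : Fin d → ℝ) (K Q : Fin d → Fin de → ℝ) : ℝ :=
  (1 / (n : ℝ)) * ∑ i, Real.exp (-(∑ l, gam X y v i l * S (gM X z i K Q) l))

/-- Partial derivative of f with respect to the (a,b) entry of a matrix. -/
def pDM {d de : ℕ} (f : (Fin d → Fin de → ℝ) → ℝ) (M : Fin d → Fin de → ℝ)
    (a : Fin d) (b : Fin de) : ℝ :=
  fderiv ℝ f M (Pi.single a (Pi.single b 1))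

/-- Gradient flow on the key and query matrices. -/
def MFlow (X : Fin n → Fin L → Fin d → ℝ) (z : Fin n → Fin d → ℝ)
    (y : Fin n → ℝ) (v : Fin d → ℝ) (K Q : ℝ → Fin d → Fin de → ℝ) : Prop :=
  ∀ t : ℝ, 0 ≤ t → ∀ (a : Fin d) (b : Fin de),
    HasDerivAt (fun s => K s a b) (-(pDM (fun M => lossM X z y v M (Q t)) (K t) a b)) t ∧
    HasDerivAt (fun s => Q s a b) (-(pDM (fun M => lossM X z y v (K t) M) (Q t) a b)) t

/-- A rectangular matrix is diagonal: zero off the main diagonal. -/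
def RectDiag {d de : ℕ} (M : Fin d → Fin de → ℝ) : Prop :=
  ∀ (a : Fin d) (b : Fin de), (a : ℕ) ≠ (b : ℕ) → M a b = 0

/-- Orthogonality: U^⊤ U = 1. -/
def Orth {d : ℕ} (U : Fin d → Fin d → ℝ) : Prop :=
  ∀ j j' : Fin d, ∑ a, U a j * U a j' = (if j = j' then (1:ℝ) else 0)

/-- Assumption B1, with the pairing of non-optimal tokens given by the involution σ. -/
def B1 (X : Fin n → Fin L → Fin d → ℝ) (z : Fin n → Fin d → ℝ)
    (opt : Fin n → Fin L) (σ : Fin n → Fin L → Fin L) : Prop :=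
  (∀ i j : Fin n, i ≠ j →
    (∑ a, X i (opt i) a * X j (opt j) a = 0) ∧ (∑ a, z i a * z j a = 0)) ∧
  (∀ i, |∑ a, X i (opt i) a * z i a| = l2 (X i (opt i)) * l2 (z i)) ∧
  (∀ i, ∀ l, l ≠ opt i → σ i l ≠ opt i ∧ σ i l ≠ l ∧ σ i (σ i l) = l ∧
    ∃ c : ℝ, -1 ≤ c ∧ c < 1 ∧
      (∑ a, X i (opt i) a * (X i l a - X i (σ i l) a)) = 0 ∧
      (∀ a, X i l a + X i (σ i l) a = 2 * c * X i (opt i) a))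

/-- Rotated constraint vectors B̃_{il}. -/
def Btil (X : Fin n → Fin L → Fin d → ℝ) (z : Fin n → Fin d → ℝ)
    (opt : Fin n → Fin L) (pim : Fin n → Fin d) (i : Fin n) (l : Fin L) (j : Fin d) : ℝ :=
  Real.sign (∑ a, X i (opt i) a * z i a) * (∑ a, (X i (opt i) a - X i l a) * z i a) *
    (if j = pim i then 1 else 0)

/-- Margin with respect to the rotated constraints. -/
def marginB (X : Fin n → Fin L → Fin d → ℝ) (z : Fin n → Fin d → ℝ)
    (opt : Fin n → Fin L) (pim : Fin n → Fin d) (β : Fin d → ℝ) : ℝ :=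
  sInf {m : ℝ | ∃ i : Fin n, ∃ l : Fin L, l ≠ opt i ∧ m = ∑ j, β j * Btil X z opt pim i l j}

/-- Margin for a combined attention weight matrix. -/
def marginM (X : Fin n → Fin L → Fin d → ℝ) (z : Fin n → Fin d → ℝ)
    (opt : Fin n → Fin L) (W : Fin d → Fin d → ℝ) : ℝ :=
  sInf {m : ℝ | ∃ i : Fin n, ∃ l : Fin L, l ≠ opt i ∧
    m = ∑ a, ∑ c, (X i (opt i) a - X i l a) * W a c * z i c}

/-- Nuclear norm ‖W‖_* = trace((W^⊤W)^{1/2}). -/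
def nuclear {d : ℕ} (W : Matrix (Fin d) (Fin d) ℝ) : ℝ :=
  ((Matrix.posSemidef_conjTranspose_mul_self W).1.eigenvectorUnitary.1 *
    Matrix.diagonal ((RCLike.ofReal : ℝ → ℝ) ∘ (√·) ∘ (Matrix.posSemidef_conjTranspose_mul_self W).1.eigenvalues) *
    (star (Matrix.posSemidef_conjTranspose_mul_self W).1.eigenvectorUnitary :
      Matrix (Fin d) (Fin d) ℝ)).trace

end AttnGF

namespace AttnGF

lemma sum_exp_pos {L : ℕ} (hL : 0 < L) (u : Fin L → ℝ) : 0 < ∑ j, Real.exp (u j) :=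
  Finset.sum_pos (fun j _ => Real.exp_pos _) (by simp [Finset.univ_nonempty_iff, ← Fin.pos_iff_nonempty, hL])

lemma S_pos {L : ℕ} (hL : 0 < L) (u : Fin L → ℝ) (l : Fin L) : 0 < S u l :=
  div_pos (Real.exp_pos _) (sum_exp_pos hL u)

lemma S_sum {L : ℕ} (hL : 0 < L) (u : Fin L → ℝ) : ∑ l, S u l = 1 := by
  unfold S
  rw [← Finset.sum_div, div_self (ne_of_gt (sum_exp_pos hL u))]

lemma S_congr {L : ℕ} (u : Fin L → ℝ) {l l' : Fin L} (h : u l = u l') : S u l = S u l' := by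
  unfold S; rw [h]

lemma l2_pos {d : ℕ} {x : Fin d → ℝ} (hx : x ≠ 0) : 0 < l2 x := by
  obtain ⟨j, hj⟩ := Function.ne_iff.mp hx
  exact Real.sqrt_pos.mpr (Finset.sum_pos' (fun k _ => sq_nonneg _)
    ⟨j, Finset.mem_univ j, pow_pos (abs_pos.mpr hj) 2 |>.trans_le (by rw [sq_abs])⟩)

lemma l2_smul {d : ℕ} (c : ℝ) (x : Fin d → ℝ) : l2 (fun a => c * x a) = |c| * l2 x := by
  unfold l2
  rw [show ∑ j, (c * x j) ^ 2 = c ^ 2 * ∑ j, x j ^ 2 by rw [Finset.mul_sum]; ring_nf,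
    Real.sqrt_mul (sq_nonneg c), Real.sqrt_sq_eq_abs]

end AttnGF

namespace AttnGF

/-- under alignment, ψ_i = X_i^⊤ Σ(g_i) γ_i is a strictly positive multiple
of the optimal token; in particular it is nonzero and has the same direction. -/
theorem statement18 {n L d de : ℕ} (hL : 2 ≤ L)
    (X : Fin n → Fin L → Fin d → ℝ) (z : Fin n → Fin d → ℝ)
    (y : Fin n → ℝ) (v : Fin d → ℝ)
    (opt : Fin n → Fin L) (nopt : Fin n → ℝ)
    (hA1 : A1 X y v opt nopt)
    (σ : Fin n → Fin L → Fin L) (hB1 : B1 X z opt σ)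
    (hx0 : ∀ i : Fin n, X i (opt i) ≠ 0) (hz0 : ∀ i : Fin n, z i ≠ 0)
    (K Q : Fin d → Fin de → ℝ)
    (UK UQ : Fin d → Fin d → ℝ) (V : Fin de → Fin de → ℝ)
    (hUK : Orth UK) (hUQ : Orth UQ) (hV : Orth V)
    (pim : Fin n → Fin d) (hpim : Function.Injective pim)
    (hcolK : ∀ (i : Fin n) (a : Fin d),
      X i (opt i) a / l2 (X i (opt i)) = UK a (pim i))
    (hcolQ : ∀ (i : Fin n) (a : Fin d),
      z i a / l2 (z i) = UQ a (pim i))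
    (ΛK ΛQ : Fin d → Fin de → ℝ) (hΛK : RectDiag ΛK) (hΛQ : RectDiag ΛQ)
    (hK : ∀ (a : Fin d) (b : Fin de),
      K a b = ∑ j, ∑ m, UK a j * ΛK j m * V b m)
    (hQ : ∀ (a : Fin d) (b : Fin de),
      Q a b = ∑ j, ∑ m, UQ a j * ΛQ j m * V b m) :
    ∀ i : Fin n,
      (∃ c : ℝ, 0 < c ∧ ∀ a : Fin d,
        (∑ l, X i l a * SigMul (gM X z i K Q) (gam X y v i) l) = c * X i (opt i) a) ∧
      (fun a => ∑ l, X i l a * SigMul (gM X z i K Q) (gam X y v i) l) ≠ 0 ∧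
      (∀ a : Fin d,
        (∑ l, X i l a * SigMul (gM X z i K Q) (gam X y v i) l) /
            l2 (fun a' => ∑ l, X i l a' * SigMul (gM X z i K Q) (gam X y v i) l) =
          X i (opt i) a / l2 (X i (opt i)) ∧
        (∑ l, X i l a * SigMul (gM X z i K Q) (gam X y v i) l) /
            l2 (fun a' => ∑ l, X i l a' * SigMul (gM X z i K Q) (gam X y v i) l) =
          UK a (pim i)) := by
  intro i
  have hLpos : 0 < L := by omega
  have hzpos : 0 < l2 (z i) := l2_pos (hz0 i)
  have hxpos : 0 < l2 (X i (opt i)) := l2_pos (hx0 i)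
  have hz' : ∀ a, z i a = l2 (z i) * UQ a (pim i) := by
    intro a; rw [← hcolQ i a]; field_simp
  -- auxiliary: the combined weight vector w
  set w : Fin d → ℝ := fun a => ∑ b, ∑ c, K a b * Q c b * z i c with hwdef
  -- step 1: g l = ∑_a X_l a * w a
  have hgw : ∀ l, gM X z i K Q l = ∑ a, X i l a * w a := by
    intro l
    unfold gM
    refine Finset.sum_congr rfl fun a _ => ?_
    rw [hwdef]
    rw [Finset.mul_sum]
    refine Finset.sum_congr rfl fun b _ => ?_
    rw [Finset.mul_sum]
    refine Finset.sum_congr rfl fun c _ => ?_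
    ring
  -- step 2: KQ^T is UK Diag UQ^T
  have hQV : ∀ (c : Fin d) (m : Fin de), (∑ b, V b m * Q c b) = ∑ j', UQ c j' * ΛQ j' m := by
    intro c m
    have e1 : ∀ b, V b m * Q c b
        = ∑ j', ∑ m', (UQ c j' * ΛQ j' m') * (V b m' * V b m) := by
      intro b
      rw [hQ, Finset.mul_sum]
      refine Finset.sum_congr rfl fun j' _ => ?_
      rw [Finset.mul_sum]
      refine Finset.sum_congr rfl fun m' _ => ?_
      ring
    calc (∑ b, V b m * Q c b)
        = ∑ b, ∑ j', ∑ m', (UQ c j' * ΛQ j' m') * (V b m' * V b m) :=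
          Finset.sum_congr rfl fun b _ => e1 b
      _ = ∑ j', ∑ m', (UQ c j' * ΛQ j' m') * (∑ b, V b m' * V b m) := by
          rw [Finset.sum_comm]
          refine Finset.sum_congr rfl fun j' _ => ?_
          rw [Finset.sum_comm]
          refine Finset.sum_congr rfl fun m' _ => ?_
          rw [Finset.mul_sum]
      _ = ∑ j', UQ c j' * ΛQ j' m := by
          refine Finset.sum_congr rfl fun j' _ => ?_
          rw [show (∑ m', (UQ c j' * ΛQ j' m') * (∑ b, V b m' * V b m))
              = ∑ m', (UQ c j' * ΛQ j' m') * (if m' = m then 1 else 0) from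
            Finset.sum_congr rfl fun m' _ => by rw [hV m' m]]
          simp
  have hKQb : ∀ (a c : Fin d), (∑ b, K a b * Q c b)
      = ∑ j, (UK a j * UQ c j) * (∑ m, ΛK j m * ΛQ j m) := by
    intro a c
    have e1 : ∀ b, K a b * Q c b
        = ∑ j, ∑ m, (UK a j * ΛK j m) * (V b m * Q c b) := by
      intro b
      conv_lhs => rw [hK]
      rw [Finset.sum_mul]
      refine Finset.sum_congr rfl fun j _ => ?_
      rw [Finset.sum_mul]
      refine Finset.sum_congr rfl fun m _ => ?_
      ring
    calc (∑ b, K a b * Q c b)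
        = ∑ b, ∑ j, ∑ m, (UK a j * ΛK j m) * (V b m * Q c b) :=
          Finset.sum_congr rfl fun b _ => e1 b
      _ = ∑ j, ∑ m, (UK a j * ΛK j m) * (∑ b, V b m * Q c b) := by
          rw [Finset.sum_comm]
          refine Finset.sum_congr rfl fun j _ => ?_
          rw [Finset.sum_comm]
          refine Finset.sum_congr rfl fun m _ => ?_
          rw [Finset.mul_sum]
      _ = ∑ j, ∑ m, (UK a j * ΛK j m) * (UQ c j * ΛQ j m) := by
          refine Finset.sum_congr rfl fun j _ => Finset.sum_congr rfl fun m _ => ?_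
          rw [hQV c m]
          by_cases hjm : (j : ℕ) = (m : ℕ)
          · congr 1
            refine Finset.sum_eq_single j (fun j' _ hj' => ?_) (by simp)
            have : (j' : ℕ) ≠ (m : ℕ) := by
              intro h
              exact hj' (Fin.ext (h.trans hjm.symm))
            rw [hΛQ j' m this, mul_zero]
          · rw [hΛK j m hjm]
            ring
      _ = ∑ j, (UK a j * UQ c j) * (∑ m, ΛK j m * ΛQ j m) := by
          refine Finset.sum_congr rfl fun j _ => ?_
          rw [Finset.mul_sum]
          refine Finset.sum_congr rfl fun m _ => ?_
          ring
  -- step 3: w is a multiple of UK _ (pim i), hence of X i (opt i)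
  have hUQz : ∀ j : Fin d, (∑ c, UQ c j * z i c) = l2 (z i) * (if j = pim i then 1 else 0) := by
    intro j
    calc (∑ c, UQ c j * z i c)
        = ∑ c, l2 (z i) * (UQ c j * UQ c (pim i)) := by
          refine Finset.sum_congr rfl fun c _ => ?_
          rw [hz' c]; ring
      _ = l2 (z i) * (if j = pim i then 1 else 0) := by
          rw [← Finset.mul_sum, hUQ j (pim i)]
  have hw : ∀ a, w a = (l2 (z i) * ∑ m, ΛK (pim i) m * ΛQ (pim i) m) * UK a (pim i) := by
    intro a
    calc w a = ∑ c, (∑ b, K a b * Q c b) * z i c := by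
          simp only [hwdef]
          rw [Finset.sum_comm]
          exact Finset.sum_congr rfl fun c _ => (Finset.sum_mul ..).symm
      _ = ∑ c, ∑ j, ((UK a j * (∑ m, ΛK j m * ΛQ j m)) * (UQ c j * z i c)) := by
          refine Finset.sum_congr rfl fun c _ => ?_
          rw [hKQb a c, Finset.sum_mul]
          exact Finset.sum_congr rfl fun j _ => by ring
      _ = ∑ j, (UK a j * (∑ m, ΛK j m * ΛQ j m)) * (∑ c, UQ c j * z i c) := by
          rw [Finset.sum_comm]
          exact Finset.sum_congr rfl fun j _ => (Finset.mul_sum ..).symm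
      _ = ∑ j, (UK a j * (∑ m, ΛK j m * ΛQ j m)) * (l2 (z i) * (if j = pim i then 1 else 0)) := by
          exact Finset.sum_congr rfl fun j _ => by rw [hUQz j]
      _ = (l2 (z i) * ∑ m, ΛK (pim i) m * ΛQ (pim i) m) * UK a (pim i) := by
          rw [Finset.sum_eq_single (pim i) (fun j _ hj => by simp [hj]) (by simp)]
          simp; ring
  have hxUK : ∀ a, UK a (pim i) = X i (opt i) a / l2 (X i (opt i)) := fun a => (hcolK i a).symm
  -- g l = κ * <x_l, x_opt>
  set κ : ℝ := (l2 (z i) * ∑ m, ΛK (pim i) m * ΛQ (pim i) m) / l2 (X i (opt i)) with hκ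
  have hgform : ∀ l, gM X z i K Q l = κ * ∑ a, X i l a * X i (opt i) a := by
    intro l
    rw [hgw l, Finset.mul_sum]
    refine Finset.sum_congr rfl fun a _ => ?_
    rw [hw a, hxUK a, hκ]
    field_simp
  -- g (σ i l) = g l for non-optimal l
  have hgσ : ∀ l, l ≠ opt i → gM X z i K Q (σ i l) = gM X z i K Q l := by
    intro l hl
    obtain ⟨_, _, _, c, _, _, hdot, _⟩ := hB1.2.2 i l hl
    rw [hgform, hgform]
    congr 1
    have : (∑ a, X i l a * X i (opt i) a) - (∑ a, X i (σ i l) a * X i (opt i) a) = 0 := by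
      rw [← Finset.sum_sub_distrib, ← hdot]
      exact Finset.sum_congr rfl fun a _ => by ring
    linarith
  -- softmax facts
  set g : Fin L → ℝ := gM X z i K Q with hgdef
  set E : Finset (Fin L) := Finset.univ.erase (opt i) with hE
  have hmemE : ∀ l, l ∈ E ↔ l ≠ opt i := by
    intro l; rw [hE, Finset.mem_erase]; simp
  have hEne : E.Nonempty := by
    obtain ⟨l0, hl0⟩ := Fintype.exists_ne_of_one_lt_card (by simp; omega) (opt i)
    exact ⟨l0, (hmemE l0).mpr hl0⟩
  have hsemE : ∑ l ∈ E, S g l = 1 - S g (opt i) := by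
    have := S_sum hLpos g
    rw [← Finset.add_sum_erase _ _ (Finset.mem_univ (opt i))] at this
    rw [← hE] at this
    linarith
  set Δ : ℝ := gam X y v i (opt i) - nopt i with hΔ
  have hΔpos : 0 < Δ := by
    obtain ⟨l0, hl0⟩ := hEne
    obtain ⟨h1, h2⟩ := hA1 i l0 ((hmemE l0).mp hl0)
    rw [hΔ]; linarith
  have hγE : ∀ l ∈ E, gam X y v i l = nopt i := fun l hl => (hA1 i l ((hmemE l).mp hl)).2
  have hm : (∑ j, S g j * gam X y v i j)
      = S g (opt i) * gam X y v i (opt i) + (1 - S g (opt i)) * nopt i := by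
    rw [← Finset.add_sum_erase _ _ (Finset.mem_univ (opt i)), ← hE, ← hsemE, Finset.sum_mul]
    congr 1
    exact Finset.sum_congr rfl fun l hl => by rw [hγE l hl]
  -- ψ in terms of the non-optimal sum
  have hψsum : ∀ a, (∑ l, X i l a * SigMul g (gam X y v i) l)
      = Δ * S g (opt i) * ∑ l ∈ E, S g l * (X i (opt i) a - X i l a) := by
    intro a
    rw [← Finset.add_sum_erase _ _ (Finset.mem_univ (opt i)), ← hE]
    have h1 : SigMul g (gam X y v i) (opt i) = S g (opt i) * ((1 - S g (opt i)) * Δ) := by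
      unfold SigMul; rw [hm, hΔ]; ring
    have h2 : ∀ l ∈ E, X i l a * SigMul g (gam X y v i) l
        = -(S g (opt i) * Δ) * (S g l * X i l a) := by
      intro l hl
      unfold SigMul; rw [hm, hγE l hl, hΔ]; ring
    rw [h1, Finset.sum_congr rfl h2, ← Finset.mul_sum]
    have h3 : ∑ l ∈ E, S g l * (X i (opt i) a - X i l a)
        = (1 - S g (opt i)) * X i (opt i) a - ∑ l ∈ E, S g l * X i l a := by
      rw [← hsemE, Finset.sum_mul, ← Finset.sum_sub_distrib]
      exact Finset.sum_congr rfl fun l _ => by ring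
    rw [h3]
    ring
  -- pairing: the non-optimal sum is a positive multiple of x_opt
  have hccex : ∀ l, l ≠ opt i → ∃ c : ℝ, c < 1 ∧
      (∀ a, X i l a + X i (σ i l) a = 2 * c * X i (opt i) a) := by
    intro l hl
    obtain ⟨_, _, _, c, _, hc2, _, hc4⟩ := hB1.2.2 i l hl
    exact ⟨c, hc2, hc4⟩
  choose! cc hcclt hcceq using hccex
  have hσE : ∀ l ∈ E, σ i l ∈ E := by
    intro l hl
    exact (hmemE _).mpr (hB1.2.2 i l ((hmemE l).mp hl)).1
  have hσσ : ∀ l ∈ E, σ i (σ i l) = l := fun l hl => (hB1.2.2 i l ((hmemE l).mp hl)).2.2.1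
  have hsσ : ∀ l ∈ E, S g (σ i l) = S g l := fun l hl =>
    S_congr g (hgσ l ((hmemE l).mp hl))
  have hre : ∀ f : Fin L → ℝ, (∑ l ∈ E, f (σ i l)) = ∑ l ∈ E, f l := by
    intro f
    exact Finset.sum_nbij' (σ i) (σ i) hσE hσE hσσ hσσ (fun l _ => rfl)
  set C : ℝ := ∑ l ∈ E, S g l * (1 - cc l) with hC
  have hCpos : 0 < C := by
    refine Finset.sum_pos (fun l hl => ?_) hEne
    have := hcclt l ((hmemE l).mp hl)
    have := S_pos hLpos g l
    nlinarith
  have hTsum : ∀ a, (∑ l ∈ E, S g l * (X i (opt i) a - X i l a)) = C * X i (opt i) a := by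
    intro a
    have hre2 : (∑ l ∈ E, S g l * (X i (opt i) a - X i (σ i l) a))
        = ∑ l ∈ E, S g l * (X i (opt i) a - X i l a) := by
      rw [show (∑ l ∈ E, S g l * (X i (opt i) a - X i (σ i l) a))
          = ∑ l ∈ E, S g (σ i l) * (X i (opt i) a - X i (σ i l) a) from
        Finset.sum_congr rfl fun l hl => by rw [hsσ l hl]]
      exact hre (fun l => S g l * (X i (opt i) a - X i l a))
    have hdouble : (∑ l ∈ E, S g l * (X i (opt i) a - X i l a))
        + (∑ l ∈ E, S g l * (X i (opt i) a - X i l a))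
        = ∑ l ∈ E, S g l * (2 * (1 - cc l) * X i (opt i) a) := by
      nth_rewrite 1 [← hre2]
      rw [← Finset.sum_add_distrib]
      refine Finset.sum_congr rfl fun l hl => ?_
      have h4 := hcceq l ((hmemE l).mp hl) a
      linear_combination (-(S g l)) * h4
    have h5 : (∑ l ∈ E, S g l * (2 * (1 - cc l) * X i (opt i) a))
        = 2 * (C * X i (opt i) a) := by
      rw [hC, Finset.sum_mul, Finset.mul_sum]
      exact Finset.sum_congr rfl fun l _ => by ring
    rw [h5] at hdouble
    linarith
  -- final assembly
  set c₀ : ℝ := Δ * S g (opt i) * C with hc₀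
  have hc₀pos : 0 < c₀ := by
    rw [hc₀]
    exact mul_pos (mul_pos hΔpos (S_pos hLpos g (opt i))) hCpos
  have hψfin : ∀ a, (∑ l, X i l a * SigMul g (gam X y v i) l) = c₀ * X i (opt i) a := by
    intro a
    rw [hψsum a, hTsum a, hc₀]; ring
  refine ⟨⟨c₀, hc₀pos, hψfin⟩, ?_, ?_⟩
  · intro h
    obtain ⟨a, ha⟩ := Function.ne_iff.mp (hx0 i)
    have := congrFun h a
    rw [hψfin a] at this
    simp only [Pi.zero_apply] at this
    exact ha (by
      rcases mul_eq_zero.mp this with h' | h'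
      · exact absurd h' (ne_of_gt hc₀pos)
      · exact h')
  · intro a
    have hfn : (fun a' => ∑ l, X i l a' * SigMul g (gam X y v i) l)
        = fun a' => c₀ * X i (opt i) a' := funext hψfin
    have hl2 : l2 (fun a' => ∑ l, X i l a' * SigMul g (gam X y v i) l)
        = c₀ * l2 (X i (opt i)) := by
      rw [hfn, l2_smul, abs_of_pos hc₀pos]
    have key : (∑ l, X i l a * SigMul g (gam X y v i) l) /
        l2 (fun a' => ∑ l, X i l a' * SigMul g (gam X y v i) l)
        = X i (opt i) a / l2 (X i (opt i)) := by
      rw [hψfin a, hl2, mul_div_mul_left _ _ (ne_of_gt hc₀pos)]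
    exact ⟨key, key.trans (hcolK i a)⟩

end AttnGF
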